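/- Let (Ω, 𝒜) be a measurable space, μ a probability measure on Ω, β > 0, and f : Ω → ℝ a bounded measurable function. Set Z = ∫ exp(−f/β) dμ and let ρ be the probability measure with density dρ/dμ = Z⁻¹ exp(−f/β). Then the minimum value of the functional ν ↦ ∫ f dν + β·KL(ν‖μ), attained at ν = ρ, equals −β·log Z, i.e., ∫ f dρ + β·KL(ρ‖μ) = −β·log ∫ exp(−f/β) dμ. -/

import Mathlib

open MeasureTheory Real Classical

/-- The Kullback–Leibler divergence `KL(ν‖μ)`, equal to `∫ log (dν/dμ) dν` when `ν ≪ μ`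
(and the log-likelihood ratio is integrable), and `+∞` otherwise. -/
noncomputable def klDiv {Ω : Type*} [MeasurableSpace Ω] (ν μ : Measure Ω) : EReal :=
  if ν ≪ μ ∧ Integrable (llr ν μ) ν then ((∫ ω, llr ν μ ω ∂ν : ℝ) : EReal) else ⊤

/-- The minimum value of `ν ↦ ∫ f dν + β·KL(ν‖μ)`, attained at the Gibbs measure `ρ` with
density `Z⁻¹ exp(−f/β)` with respect to `μ`, equals the free energy `−β·log Z`. -/
theorem gibbs_free_energy_value {Ω : Type*} [MeasurableSpace Ω]
    (μ : Measure Ω) [IsProbabilityMeasure μ]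
    (β : ℝ) (hβ : 0 < β)
    (f : Ω → ℝ) (hf : Measurable f) (C : ℝ) (hC : ∀ ω, |f ω| ≤ C)
    (Z : ℝ) (hZ : Z = ∫ ω, exp (-f ω / β) ∂μ)
    (ρ : Measure Ω)
    (hρ : ρ = μ.withDensity fun ω => ENNReal.ofReal (Z⁻¹ * exp (-f ω / β))) :
    ((∫ ω, f ω ∂ρ : ℝ) : EReal) + (β : EReal) * klDiv ρ μ =
      ((-β * Real.log (∫ ω, exp (-f ω / β) ∂μ) : ℝ) : EReal) := by
  set g : Ω → ℝ := fun ω => Z⁻¹ * exp (-f ω / β) with hg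
  have hexp_meas : Measurable fun ω => exp (-f ω / β) := by
    exact (measurable_exp.comp ((hf.neg).div_const β))
  have hexp_bdd : ∀ ω, exp (-f ω / β) ≤ exp (C / β) := by
    intro ω
    apply exp_le_exp.2
    have := abs_le.1 (hC ω)
    gcongr
    linarith [this.1]
  have hexp_int : Integrable (fun ω => exp (-f ω / β)) μ := by
    apply Integrable.mono' (integrable_const (exp (C / β))) hexp_meas.aestronglyMeasurable
    filter_upwards with ω
    rw [Real.norm_eq_abs, abs_of_pos (exp_pos _)]
    exact hexp_bdd ω
  have hZpos : 0 < Z := by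
    rw [hZ]
    have h0 : (0:ℝ) < exp (-C / β) := exp_pos _
    calc (0:ℝ) < ∫ ω, exp (-C / β) ∂μ := by
          rw [integral_const]; simp [h0]
      _ ≤ ∫ ω, exp (-f ω / β) ∂μ := by
          apply integral_mono (integrable_const _) hexp_int
          intro ω
          apply exp_le_exp.2
          have := abs_le.1 (hC ω)
          gcongr
          linarith [this.2]
  have hg_meas : Measurable g := (hexp_meas.const_mul _)
  have hg_pos : ∀ ω, 0 < g ω := fun ω => mul_pos (inv_pos.2 hZpos) (exp_pos _)
  have hg_int : Integrable g μ := hexp_int.const_mul _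
  have hρ_ac : ρ ≪ μ := by rw [hρ]; exact withDensity_absolutelyContinuous _ _
  have hlint : ∫⁻ ω, ENNReal.ofReal (g ω) ∂μ = 1 := by
    rw [← ofReal_integral_eq_lintegral_ofReal hg_int
      (Filter.Eventually.of_forall fun ω => (hg_pos ω).le)]
    rw [hg, integral_const_mul, ← hZ, inv_mul_cancel₀ hZpos.ne']
    simp
  have hρ_prob : IsProbabilityMeasure ρ := by
    constructor
    rw [hρ, withDensity_apply _ MeasurableSet.univ, Measure.restrict_univ, hlint]
  have hrn : ρ.rnDeriv μ =ᶠ[ae μ] fun ω => ENNReal.ofReal (g ω) := by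
    rw [hρ]; exact Measure.rnDeriv_withDensity μ (by measurability)
  have hllr_ae : llr ρ μ =ᶠ[ae ρ] fun ω => -Real.log Z + -f ω / β := by
    filter_upwards [hρ_ac.ae_eq hrn] with ω hω
    rw [llr_def]
    simp only [hω, ENNReal.toReal_ofReal (hg_pos ω).le, hg]
    rw [ENNReal.toReal_ofReal (mul_pos (inv_pos.2 hZpos) (exp_pos _)).le, Real.log_mul (inv_pos.2 hZpos).ne' (exp_pos _).ne', Real.log_inv, Real.log_exp]
  have hf_int : Integrable f ρ := by
    apply Integrable.mono' (integrable_const C) hf.aestronglyMeasurable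
    filter_upwards with ω using (hC ω)
  have hllr_int : Integrable (llr ρ μ) ρ := by
    apply Integrable.congr ?_ hllr_ae.symm
    exact (integrable_const _).add ((hf_int.neg).div_const β)
  have hint_llr : ∫ ω, llr ρ μ ω ∂ρ = -Real.log Z + -(∫ ω, f ω ∂ρ) / β := by
    rw [integral_congr_ae hllr_ae]
    have : Integrable (fun ω => -f ω / β) ρ := (hf_int.neg).div_const β
    rw [integral_add (integrable_const _) this, integral_const]
    simp [integral_div, integral_neg, measure_univ]
  rw [klDiv, if_pos ⟨hρ_ac, hllr_int⟩, hint_llr, ← EReal.coe_mul, ← EReal.coe_add,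
    EReal.coe_eq_coe_iff, ← hZ]
  field_simp
  ring
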